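/- (Non-uniqueness in the rank-deficient case with μ = 0) Let λ ∈ ℝ^N with λ_n ≥ 0, let I₀ = {n : λ_n = 0}, let c ∈ ℝ^N with c_n ≥ 0, and let ε > 0 satisfy ∑_{n∈I₀} c_n² > ε². If u⋆ ∈ ℝ^N is a global minimizer of ∑_{n=1}^N λ_n u_n² over {u ∈ ℝ^N : u ≥ 0, ∑_{n=1}^N c_n u_n ≥ ε‖u‖₂ + 1}, then for every t > 1 the vector t·u⋆ is also a global minimizer; in particular the minimizer is not unique. -/

import Mathlib

open Classical in
/-- non-uniqueness, rank-deficient case with μ = 0: with `λ ≥ 0`,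
`I₀ = {n : λ_n = 0}`, `c ≥ 0`, `0 < ε` and `∑_{I₀} c_n² > ε²`, if `u⋆` is a
global minimizer of `∑ λ_n u_n²` over `{u ≥ 0 : ∑ c_n u_n ≥ ε‖u‖₂ + 1}`, then
`t·u⋆` is also a global minimizer for every `t > 1`; in particular the minimizer
is not unique. -/
theorem rab_nonuniqueness_zero_multiplier (N : ℕ)
    (lam c : Fin N → ℝ) (hlam : ∀ n, 0 ≤ lam n) (hc : ∀ n, 0 ≤ c n)
    (ε : ℝ) (hε : 0 < ε)
    (hbig : ε ^ 2 < ∑ n ∈ Finset.univ.filter (fun n => lam n = 0), (c n) ^ 2)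
    (ustar : Fin N → ℝ)
    (hfeas : (∀ n, 0 ≤ ustar n) ∧
      ε * Real.sqrt (∑ n, (ustar n) ^ 2) + 1 ≤ ∑ n, c n * ustar n)
    (hopt : ∀ u : Fin N → ℝ,
      (∀ n, 0 ≤ u n) → ε * Real.sqrt (∑ n, (u n) ^ 2) + 1 ≤ ∑ n, c n * u n →
      ∑ n, lam n * (ustar n) ^ 2 ≤ ∑ n, lam n * (u n) ^ 2) :
    (∀ t : ℝ, 1 < t →
      ((∀ n, 0 ≤ t * ustar n) ∧
        ε * Real.sqrt (∑ n, (t * ustar n) ^ 2) + 1 ≤ ∑ n, c n * (t * ustar n)) ∧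
      (∀ u : Fin N → ℝ,
        (∀ n, 0 ≤ u n) → ε * Real.sqrt (∑ n, (u n) ^ 2) + 1 ≤ ∑ n, c n * u n →
        ∑ n, lam n * (t * ustar n) ^ 2 ≤ ∑ n, lam n * (u n) ^ 2)) ∧
    (∃ u' : Fin N → ℝ, u' ≠ ustar ∧
      (∀ n, 0 ≤ u' n) ∧ ε * Real.sqrt (∑ n, (u' n) ^ 2) + 1 ≤ ∑ n, c n * u' n ∧
      (∀ u : Fin N → ℝ,
        (∀ n, 0 ≤ u n) → ε * Real.sqrt (∑ n, (u n) ^ 2) + 1 ≤ ∑ n, c n * u n →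
        ∑ n, lam n * (u' n) ^ 2 ≤ ∑ n, lam n * (u n) ^ 2)) := by
  obtain ⟨hpos, hfe⟩ := hfeas
  set S := ∑ n ∈ Finset.univ.filter (fun n => lam n = 0), (c n) ^ 2 with hSdef
  have hSpos : 0 < S := lt_of_le_of_lt (sq_nonneg ε) hbig
  have hsd : ε < Real.sqrt S := by
    have := Real.sqrt_lt_sqrt (sq_nonneg ε) hbig
    rwa [Real.sqrt_sq hε.le] at this
  have hsS : 0 < Real.sqrt S := hε.trans hsd
  have hSsq : Real.sqrt S * Real.sqrt S = S := Real.mul_self_sqrt hSpos.le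
  have hden : 0 < S - ε * Real.sqrt S := by nlinarith
  set α := (S - ε * Real.sqrt S)⁻¹ with hαdef
  have hα : 0 < α := inv_pos.mpr hden
  set v : Fin N → ℝ := fun n => if lam n = 0 then α * c n else 0 with hvdef
  have hvnn : ∀ n, 0 ≤ v n := by
    intro n
    by_cases h : lam n = 0 <;> simp [hvdef, h]
    exact mul_nonneg hα.le (hc n)
  have hsum1 : ∑ n, c n * v n = α * S := by
    rw [hSdef, Finset.mul_sum, Finset.sum_filter]
    apply Finset.sum_congr rfl
    intro n _
    by_cases h : lam n = 0 <;> simp [hvdef, h] <;> ring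
  have hsum2 : ∑ n, (v n) ^ 2 = α ^ 2 * S := by
    rw [hSdef, Finset.mul_sum, Finset.sum_filter]
    apply Finset.sum_congr rfl
    intro n _
    by_cases h : lam n = 0 <;> simp [hvdef, h] <;> ring
  have hfeasv : ε * Real.sqrt (∑ n, (v n) ^ 2) + 1 ≤ ∑ n, c n * v n := by
    rw [hsum1, hsum2]
    have : Real.sqrt (α ^ 2 * S) = α * Real.sqrt S := by
      rw [Real.sqrt_mul (sq_nonneg α), Real.sqrt_sq hα.le]
    rw [this]
    have hinv : α * (S - ε * Real.sqrt S) = 1 := inv_mul_cancel₀ hden.ne'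
    nlinarith
  have hobjv : ∑ n, lam n * (v n) ^ 2 = 0 := by
    apply Finset.sum_eq_zero
    intro n _
    by_cases h : lam n = 0 <;> simp [hvdef, h]
  have hzero : ∑ n, lam n * (ustar n) ^ 2 = 0 := by
    have h1 := hopt v hvnn hfeasv
    rw [hobjv] at h1
    have h2 : 0 ≤ ∑ n, lam n * (ustar n) ^ 2 :=
      Finset.sum_nonneg fun n _ => mul_nonneg (hlam n) (sq_nonneg _)
    linarith
  have key : ∀ t : ℝ, 1 < t →
      ((∀ n, 0 ≤ t * ustar n) ∧
        ε * Real.sqrt (∑ n, (t * ustar n) ^ 2) + 1 ≤ ∑ n, c n * (t * ustar n)) ∧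
      (∀ u : Fin N → ℝ,
        (∀ n, 0 ≤ u n) → ε * Real.sqrt (∑ n, (u n) ^ 2) + 1 ≤ ∑ n, c n * u n →
        ∑ n, lam n * (t * ustar n) ^ 2 ≤ ∑ n, lam n * (u n) ^ 2) := by
    intro t ht
    have ht0 : 0 < t := lt_trans one_pos ht
    have hsumsq : ∑ n, (t * ustar n) ^ 2 = t ^ 2 * ∑ n, (ustar n) ^ 2 := by
      rw [Finset.mul_sum]; apply Finset.sum_congr rfl; intro n _; ring
    have hsqrt : Real.sqrt (∑ n, (t * ustar n) ^ 2)
        = t * Real.sqrt (∑ n, (ustar n) ^ 2) := by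
      rw [hsumsq, Real.sqrt_mul (sq_nonneg t), Real.sqrt_sq ht0.le]
    have hsumc : ∑ n, c n * (t * ustar n) = t * ∑ n, c n * ustar n := by
      rw [Finset.mul_sum]; apply Finset.sum_congr rfl; intro n _; ring
    have hsqnn : 0 ≤ Real.sqrt (∑ n, (ustar n) ^ 2) := Real.sqrt_nonneg _
    refine ⟨⟨fun n => mul_nonneg ht0.le (hpos n), ?_⟩, ?_⟩
    · rw [hsqrt, hsumc]
      nlinarith
    · intro u hu hfu
      have hobjt : ∑ n, lam n * (t * ustar n) ^ 2
          = t ^ 2 * ∑ n, lam n * (ustar n) ^ 2 := by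
        rw [Finset.mul_sum]; apply Finset.sum_congr rfl; intro n _; ring
      rw [hobjt, hzero, mul_zero]
      exact Finset.sum_nonneg fun n _ => mul_nonneg (hlam n) (sq_nonneg _)
  refine ⟨key, ?_⟩
  obtain ⟨⟨h2nn, h2fe⟩, h2opt⟩ := key 2 one_lt_two
  refine ⟨fun n => 2 * ustar n, ?_, h2nn, h2fe, h2opt⟩
  intro heq
  have hz : ∀ n, ustar n = 0 := by
    intro n
    have := congrFun heq n
    linarith
  simp only [hz, mul_zero] at hfe
  rw [Finset.sum_const_zero] at hfe
  have : Real.sqrt (∑ n : Fin N, (0:ℝ) ^ 2) = 0 := by simp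
  rw [this] at hfe
  linarith
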